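/- Let 0 < C < 1, let Q and Q̃ = Q + u v^T be n×n matrices with ‖Q‖ ≤ 1 and ‖Q̃‖ ≤ 1 in the spectral norm, and let S be the unique solution of S = C·Q S Q^T + (1−C)·I_n, and S̃ the unique solution of S̃ = C·Q̃ S̃ Q̃^T + (1−C)·I_n. Set z = S v, y = Q z, λ = v^T z, and w = y + (λ/2) u. Then the change ΔS = S̃ − S satisfies ΔS = M + M^T where M is the unique solution of the rank-one Sylvester equation M = C·Q̃ M Q̃^T + C·u w^T. -/

import Mathlib

open Matrix
open scoped Matrix.Norms.L2Operator

variable {n : ℕ}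

private lemma mul_vmv (A : Matrix (Fin n) (Fin n) ℝ) (x y : Fin n → ℝ) :
    A * vecMulVec x y = vecMulVec (A *ᵥ x) y := by
  ext i j
  simp [mul_apply, vecMulVec_apply, mulVec, dotProduct, Finset.sum_mul, mul_assoc]

private lemma vmv_mul (x y : Fin n → ℝ) (A : Matrix (Fin n) (Fin n) ℝ) :
    vecMulVec x y * A = vecMulVec x (Aᵀ *ᵥ y) := by
  ext i j
  simp [mul_apply, vecMulVec_apply, mulVec, dotProduct, Finset.mul_sum, mul_assoc]
  congr 1; ext k; ring

private lemma vmv_t (x y : Fin n → ℝ) : (vecMulVec x y)ᵀ = vecMulVec y x := by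
  ext i j; simp [vecMulVec_apply, mul_comm]

private lemma vmv_mul_vmv (a b c d : Fin n → ℝ) :
    vecMulVec a b * vecMulVec c d = (b ⬝ᵥ c) • vecMulVec a d := by
  ext i j
  simp [mul_apply, vecMulVec_apply, dotProduct, Finset.sum_mul, Finset.mul_sum]
  congr 1; ext k; ring

private lemma vmv_add_right (x a b : Fin n → ℝ) :
    vecMulVec x (a + b) = vecMulVec x a + vecMulVec x b := by
  ext i j; simp [vecMulVec_apply, mul_add]

private lemma vmv_smul_right (x : Fin n → ℝ) (c : ℝ) (a : Fin n → ℝ) :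
    vecMulVec x (c • a) = c • vecMulVec x a := by
  ext i j; simp [vecMulVec_apply]; ring

private lemma vmv_mulVec (x y a : Fin n → ℝ) :
    vecMulVec x y *ᵥ a = (y ⬝ᵥ a) • x := by
  ext i
  simp only [mulVec, vecMulVec, dotProduct, Pi.smul_apply, smul_eq_mul, of_apply,
    Finset.sum_mul]
  exact Finset.sum_congr rfl fun k _ => by ring

private lemma vmv_smul_left (c : ℝ) (x a : Fin n → ℝ) :
    vecMulVec (c • x) a = c • vecMulVec x a := by
  ext i j; simp [vecMulVec_apply]; ring

private lemma sylvester_unique {C : ℝ} (hC0 : 0 < C) (hC1 : C < 1)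
    {R : Matrix (Fin n) (Fin n) ℝ} (hR : ‖R‖ ≤ 1)
    {A X Y : Matrix (Fin n) (Fin n) ℝ}
    (hX : X = C • (R * X * Rᵀ) + A) (hY : Y = C • (R * Y * Rᵀ) + A) : X = Y := by
  have hD : X - Y = C • (R * (X - Y) * Rᵀ) := by
    calc X - Y = (C • (R * X * Rᵀ) + A) - (C • (R * Y * Rᵀ) + A) := by rw [← hX, ← hY]
    _ = C • (R * (X - Y) * Rᵀ) := by
        rw [add_sub_add_right_eq_sub, ← smul_sub, ← Matrix.sub_mul, ← Matrix.mul_sub]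
  have hRT : ‖Rᵀ‖ = ‖R‖ := by
    rw [← conjTranspose_eq_transpose_of_trivial]
    exact l2_opNorm_conjTranspose R
  have h1 : ‖X - Y‖ ≤ C * (‖R * (X - Y)‖ * ‖Rᵀ‖) := by
    calc ‖X - Y‖ = C * ‖R * (X - Y) * Rᵀ‖ := by
          conv_lhs => rw [hD]
          rw [norm_smul, Real.norm_of_nonneg hC0.le]
    _ ≤ C * (‖R * (X - Y)‖ * ‖Rᵀ‖) :=
        mul_le_mul_of_nonneg_left (l2_opNorm_mul _ _) hC0.le
  have h2 : ‖R * (X - Y)‖ ≤ ‖R‖ * ‖X - Y‖ := l2_opNorm_mul _ _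
  rw [hRT] at h1
  have h4 : (0:ℝ) ≤ ‖X - Y‖ := norm_nonneg _
  have h5 : (0:ℝ) ≤ ‖R‖ := norm_nonneg _
  have h6 : ‖R * (X - Y)‖ * ‖R‖ ≤ 1 * ‖X - Y‖ := by
    nlinarith [norm_nonneg (R * (X - Y))]
  have h3 : ‖X - Y‖ = 0 := by nlinarith
  exact sub_eq_zero.mp (norm_eq_zero.mp h3)

private lemma sylvester_exists {C : ℝ} (hC0 : 0 < C) (hC1 : C < 1)
    {R : Matrix (Fin n) (Fin n) ℝ} (hR : ‖R‖ ≤ 1) (A : Matrix (Fin n) (Fin n) ℝ) :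
    ∃ X : Matrix (Fin n) (Fin n) ℝ, X = C • (R * X * Rᵀ) + A := by
  let f : Matrix (Fin n) (Fin n) ℝ →ₗ[ℝ] Matrix (Fin n) (Fin n) ℝ :=
  { toFun := fun X => X - C • (R * X * Rᵀ)
    map_add' := fun X Y => by
      simp only [Matrix.add_mul, Matrix.mul_add, smul_add]; abel
    map_smul' := fun c X => by
      simp only [Matrix.mul_smul, Matrix.smul_mul, smul_sub, RingHom.id_apply,
        smul_comm C c] }
  have hinj : Function.Injective f := by
    refine (injective_iff_map_eq_zero f).mpr fun X hX => ?_
    have hX' : X = C • (R * X * Rᵀ) + 0 := by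
      rw [add_zero, ← sub_eq_zero]; exact hX
    exact sylvester_unique hC0 hC1 hR hX' (by simp)
  obtain ⟨X, hX⟩ := LinearMap.injective_iff_surjective.mp hinj A
  exact ⟨X, sub_eq_iff_eq_add'.mp hX⟩

/-- for a rank-one update `Q̃ = Q + u vᵀ` of the transition matrix, the SimRank
change `ΔS = S̃ - S` satisfies `ΔS = M + Mᵀ`, where `M` is the unique solution of the rank-one
Sylvester equation `M = C·Q̃ M Q̃ᵀ + C·u wᵀ` with `w = Q S v + ((vᵀ S v)/2) u`. -/
theorem simrank_rankone_update {n : ℕ} (C : ℝ) (hC0 : 0 < C) (hC1 : C < 1)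
    (Q Qt S St : Matrix (Fin n) (Fin n) ℝ) (u v : Fin n → ℝ)
    (hQt : Qt = Q + vecMulVec u v)
    (hQnorm : ‖Q‖ ≤ 1) (hQtnorm : ‖Qt‖ ≤ 1)
    (hS : S = C • (Q * S * Qᵀ) + (1 - C) • (1 : Matrix (Fin n) (Fin n) ℝ))
    (hSt : St = C • (Qt * St * Qtᵀ) + (1 - C) • (1 : Matrix (Fin n) (Fin n) ℝ))
    (z : Fin n → ℝ) (hz : z = S *ᵥ v)
    (y : Fin n → ℝ) (hy : y = Q *ᵥ z)
    (lam : ℝ) (hlam : lam = v ⬝ᵥ z)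
    (w : Fin n → ℝ) (hw : w = y + (lam / 2) • u) :
    (∃! M : Matrix (Fin n) (Fin n) ℝ,
        M = C • (Qt * M * Qtᵀ) + C • vecMulVec u w) ∧
    ∀ M : Matrix (Fin n) (Fin n) ℝ,
      M = C • (Qt * M * Qtᵀ) + C • vecMulVec u w → St - S = M + Mᵀ := by
  constructor
  · obtain ⟨M₀, hM₀⟩ := sylvester_exists hC0 hC1 hQtnorm (C • vecMulVec u w)
    exact ⟨M₀, hM₀, fun Y hY => sylvester_unique hC0 hC1 hQtnorm hY hM₀⟩
  · -- S is symmetric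
    have hSsymm : Sᵀ = S := by
      refine sylvester_unique hC0 hC1 hQnorm ?_ hS
      conv_lhs => rw [hS]
      simp [transpose_add, transpose_smul, transpose_mul, Matrix.mul_assoc]
    -- key expansion
    have key : Qt * S * Qtᵀ
        = Q * S * Qᵀ + (vecMulVec y u + vecMulVec u y + lam • vecMulVec u u) := by
      subst hz hy hlam hw
      rw [hQt, transpose_add, vmv_t]
      simp only [Matrix.add_mul, Matrix.mul_add, mul_vmv, vmv_mul, vmv_mul_vmv,
        vmv_mulVec, vmv_smul_left, transpose_transpose, hSsymm, ← Matrix.mulVec_mulVec]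
      rw [dotProduct_comm (S *ᵥ v) v]
      abel
    have key' : Q * S * Qᵀ = Qt * S * Qtᵀ
        - (vecMulVec y u + vecMulVec u y + lam • vecMulVec u u) :=
      eq_sub_of_add_eq key.symm
    have hE : vecMulVec u w + (vecMulVec u w)ᵀ
        = vecMulVec y u + vecMulVec u y + lam • vecMulVec u u := by
      rw [hw, vmv_add_right, vmv_smul_right, transpose_add, transpose_smul, vmv_t, vmv_t]
      module
    have hDelta : St - S = C • (Qt * (St - S) * Qtᵀ)
        + C • (vecMulVec u w + (vecMulVec u w)ᵀ) := by
      have e1 : St - S = C • (Qt * St * Qtᵀ - Q * S * Qᵀ) := by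
        conv_lhs => rw [hSt, hS]
        rw [add_sub_add_right_eq_sub, ← smul_sub]
      rw [Matrix.mul_sub, Matrix.sub_mul, hE]
      conv_lhs => rw [e1, key']
      module
    intro M hM
    have hMT : Mᵀ = C • (Qt * Mᵀ * Qtᵀ) + C • (vecMulVec u w)ᵀ := by
      conv_lhs => rw [hM]
      rw [transpose_add, transpose_smul, transpose_smul, transpose_mul, transpose_mul,
        transpose_transpose, Matrix.mul_assoc]
    have hX : M + Mᵀ = C • (Qt * (M + Mᵀ) * Qtᵀ)
        + C • (vecMulVec u w + (vecMulVec u w)ᵀ) := by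
      have hsum : M + Mᵀ = (C • (Qt * M * Qtᵀ) + C • vecMulVec u w)
          + (C • (Qt * Mᵀ * Qtᵀ) + C • (vecMulVec u w)ᵀ) := by rw [← hM, ← hMT]
      simp only [Matrix.mul_add, Matrix.add_mul]
      conv_lhs => rw [hsum]
      module
    exact sylvester_unique hC0 hC1 hQtnorm hDelta hX
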